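/- For every positive integer t, every region intersection graph over a K_t-minor-free graph does not contain the 1-subdivision K_t^(1) of the complete graph K_t as an induced minor. -/

import Mathlib

/-- A set of vertices is connected in `G` if the induced subgraph is connected
(in particular, it is nonempty). -/
def ConnectedIn {V : Type*} (G : SimpleGraph V) (S : Set V) : Prop :=
  (G.induce S).Connected

/-- `H` is a minor of `G`: there is a minor model of `H` in `G`, i.e. a family of
nonempty, connected, pairwise disjoint branch sets, with an edge of `G` between the
branch sets of any two vertices adjacent in `H`. -/
def IsMinor {α β : Type*} (H : SimpleGraph α) (G : SimpleGraph β) : Prop :=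
  ∃ φ : α → Set β,
    (∀ a, ConnectedIn G (φ a)) ∧
    (Pairwise fun a b => Disjoint (φ a) (φ b)) ∧
    (∀ a b : α, H.Adj a b → ∃ u ∈ φ a, ∃ v ∈ φ b, G.Adj u v)

/-- `H` is an induced minor of `G`: as for a minor model, but two distinct branch sets
are joined by an edge of `G` *iff* the corresponding vertices are adjacent in `H`. -/
def IsInducedMinor {α β : Type*} (H : SimpleGraph α) (G : SimpleGraph β) : Prop :=
  ∃ φ : α → Set β,
    (∀ a, ConnectedIn G (φ a)) ∧
    (Pairwise fun a b => Disjoint (φ a) (φ b)) ∧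
    (∀ a b : α, a ≠ b → (H.Adj a b ↔ ∃ u ∈ φ a, ∃ v ∈ φ b, G.Adj u v))

/-- `G` is a region intersection graph over `H`: every vertex `v` of `G` is assigned a
connected subgraph (region) `R v` of `H` such that two distinct vertices of `G` are
adjacent iff their regions intersect. -/
def IsRIG {α β : Type*} (G : SimpleGraph α) (H : SimpleGraph β) : Prop :=
  ∃ R : α → Set β,
    (∀ v, ConnectedIn H (R v)) ∧
    (∀ u v : α, u ≠ v → (G.Adj u v ↔ (R u ∩ R v).Nonempty))

/-- Identification relation used to build the internal vertices of the `ℓ`-subdivision: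
the `i`-th internal vertex of the edge directed as `(u, v)` equals the `(ℓ-1-i)`-th
internal vertex of the edge directed as `(v, u)`. -/
def SubdivRel {V : Type*} (G : SimpleGraph V) (ℓ : ℕ) :
    ({d : V × V // G.Adj d.1 d.2} × Fin ℓ) → ({d : V × V // G.Adj d.1 d.2} × Fin ℓ) → Prop :=
  fun a b => a.1.1.1 = b.1.1.2 ∧ a.1.1.2 = b.1.1.1 ∧ (a.2 : ℕ) + (b.2 : ℕ) + 1 = ℓ

/-- Vertices of the `ℓ`-subdivision of `G`: the branching (original) vertices together
with `ℓ` internal (subdivision) vertices on each edge. -/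
def SubdivVert {V : Type*} (G : SimpleGraph V) (ℓ : ℕ) : Type _ :=
  V ⊕ Quot (SubdivRel G ℓ)

/-- The `ℓ`-subdivision `G^(ℓ)` of `G`: every edge of `G` is replaced by a path with
`ℓ + 1` edges (so with `ℓ` new internal vertices). -/
def subdiv {V : Type*} (G : SimpleGraph V) (ℓ : ℕ) : SimpleGraph (SubdivVert G ℓ) :=
  SimpleGraph.fromRel (fun x y =>
    (ℓ = 0 ∧ ∃ u v : V, G.Adj u v ∧ x = Sum.inl u ∧ y = Sum.inl v) ∨
    (∃ (d : {d : V × V // G.Adj d.1 d.2}) (i : Fin ℓ),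
      (i : ℕ) = 0 ∧ x = Sum.inl d.1.1 ∧ y = Sum.inr (Quot.mk _ (d, i))) ∨
    (∃ (d : {d : V × V // G.Adj d.1 d.2}) (i j : Fin ℓ),
      (i : ℕ) + 1 = (j : ℕ) ∧ x = Sum.inr (Quot.mk _ (d, i)) ∧ y = Sum.inr (Quot.mk _ (d, j))))

-- ### auxiliary lemmas


def StepIn {V : Type*} (G : SimpleGraph V) (S : Set V) (a b : V) : Prop :=
  a ∈ S ∧ b ∈ S ∧ G.Adj a b

def ReachIn {V : Type*} (G : SimpleGraph V) (S : Set V) : V → V → Prop :=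
  Relation.ReflTransGen (StepIn G S)

lemma reachIn_mono {V : Type*} {G : SimpleGraph V} {S T : Set V} (h : S ⊆ T) {a b : V}
    (hr : ReachIn G S a b) : ReachIn G T a b :=
  Relation.ReflTransGen.mono (fun x y (hxy : StepIn G S x y) =>
    (⟨h hxy.1, h hxy.2.1, hxy.2.2⟩ : StepIn G T x y)) a b hr

lemma reachIn_symm {V : Type*} {G : SimpleGraph V} {S : Set V} {a b : V}
    (hr : ReachIn G S a b) : ReachIn G S b a :=
  (@Relation.ReflTransGen.stdSymm V (StepIn G S) ⟨fun _ _ ⟨h1, h2, h3⟩ => ⟨h2, h1, h3.symm⟩⟩).symm a b hr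

lemma connectedIn_iff {V : Type*} (G : SimpleGraph V) (S : Set V) :
    ConnectedIn G S ↔ S.Nonempty ∧ ∀ x ∈ S, ∀ y ∈ S, ReachIn G S x y := by
  constructor
  · intro h
    obtain ⟨x0⟩ := h.nonempty
    have hpre := h.preconnected
    refine ⟨⟨x0.1, x0.2⟩, ?_⟩
    have key : ∀ (u v : S), (G.induce S).Walk u v → ReachIn G S u.1 v.1 := by
      intro u v w
      induction w with
      | nil => exact Relation.ReflTransGen.refl
      | @cons a b c h w ih =>
        exact Relation.ReflTransGen.head ⟨a.2, b.2, h⟩ ih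
    intro x hx y hy
    obtain ⟨w⟩ := hpre ⟨x, hx⟩ ⟨y, hy⟩
    exact key _ _ w
  · rintro ⟨⟨x0, hx0⟩, hreach⟩
    have key : ∀ x y : V, ReachIn G S x y → ∀ (hx : x ∈ S) (hy : y ∈ S),
        (G.induce S).Reachable ⟨x, hx⟩ ⟨y, hy⟩ := by
      intro x y h
      induction h with
      | refl => intro hx hy; rfl
      | @tail b c _step step' ih =>
        intro hx hy
        exact (ih hx step'.1).trans (SimpleGraph.Adj.reachable (by exact step'.2.2))
    have : Nonempty ↥S := ⟨⟨x0, hx0⟩⟩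
    apply SimpleGraph.Connected.mk
    rintro ⟨x, hx⟩ ⟨y, hy⟩
    exact key x y (hreach x hx y hy) hx hy

lemma connectedIn_nonempty {V : Type*} {G : SimpleGraph V} {S : Set V}
    (h : ConnectedIn G S) : S.Nonempty := ((connectedIn_iff G S).mp h).1

lemma connectedIn_biUnion {α β : Type*} {G : SimpleGraph α} {H : SimpleGraph β}
    {S : Set α} {R : α → Set β}
    (hS : ConnectedIn G S) (hR : ∀ v, ConnectedIn H (R v))
    (hadj : ∀ u v, u ∈ S → v ∈ S → G.Adj u v → (R u ∩ R v).Nonempty) :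
    ConnectedIn H (⋃ v ∈ S, R v) := by
  obtain ⟨⟨s0, hs0⟩, hSreach⟩ := (connectedIn_iff G S).mp hS
  set T := ⋃ v ∈ S, R v with hT
  have hsub : ∀ u, u ∈ S → R u ⊆ T := fun u hu => Set.subset_biUnion_of_mem hu
  rw [connectedIn_iff]
  constructor
  · obtain ⟨z, hz⟩ := connectedIn_nonempty (hR s0)
    exact ⟨z, Set.mem_biUnion hs0 hz⟩
  · have inner : ∀ u v : α, ReachIn G S u v → u ∈ S →
        ∀ x ∈ R u, ∀ y ∈ R v, ReachIn H T x y := by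
      intro u v h
      induction h with
      | refl =>
        intro hu x hx y hy
        exact reachIn_mono (hsub u hu) (((connectedIn_iff H (R u)).mp (hR u)).2 x hx y hy)
      | @tail b c _step step' ih =>
        intro hu x hx y hy
        obtain ⟨z, hzb, hzc⟩ := hadj b c step'.1 step'.2.1 step'.2.2
        exact (ih hu x hx z hzb).trans
          (reachIn_mono (hsub c step'.2.1) (((connectedIn_iff H (R c)).mp (hR c)).2 z hzc y hy))
    intro x hx y hy
    obtain ⟨u, hu, hxu⟩ := Set.mem_iUnion₂.mp hx
    obtain ⟨v, hv, hyv⟩ := Set.mem_iUnion₂.mp hy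
    exact inner u v (hSreach u hu v hv) hu x hxu y hyv

lemma reachIn_split {β : Type*} (H : SimpleGraph β) {Y T : Set β} {x y : β}
    (hr : ReachIn H Y x y) (hy : y ∈ T) :
    ∀ _hx : x ∈ Y, x ∉ T →
    ∃ P : Set β, P ⊆ Y ∧ x ∈ P ∧ (∀ z ∈ P, z ∉ T) ∧
      (∀ z ∈ P, ReachIn H P x z) ∧ ∃ p ∈ P, ∃ q ∈ T, H.Adj p q := by
  induction hr using Relation.ReflTransGen.head_induction_on with
  | refl => intro _ hxT; exact absurd hy hxT
  | @head a c step _rest ih =>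
    intro ha haT
    by_cases hc : c ∈ T
    · refine ⟨{a}, ?_, rfl, ?_, ?_, a, rfl, c, hc, step.2.2⟩
      · intro z hz; rw [Set.mem_singleton_iff] at hz; exact hz ▸ ha
      · intro z hz; rw [Set.mem_singleton_iff] at hz; exact hz ▸ haT
      · intro z hz; rw [Set.mem_singleton_iff] at hz; exact hz ▸ Relation.ReflTransGen.refl
    · obtain ⟨P, hPY, hcP, hPT, hreach, p, hp, q, hq, hpq⟩ := ih step.2.1 hc
      have hsub : P ⊆ insert a P := Set.subset_insert a P
      refine ⟨insert a P, ?_, Set.mem_insert a P, ?_, ?_, p, hsub hp, q, hq, hpq⟩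
      · intro z hz
        rcases Set.mem_insert_iff.mp hz with h | h
        · exact h ▸ ha
        · exact hPY h
      · intro z hz
        rcases Set.mem_insert_iff.mp hz with h | h
        · exact h ▸ haT
        · exact hPT z h
      · intro z hz
        rcases Set.mem_insert_iff.mp hz with h | h
        · exact h ▸ Relation.ReflTransGen.refl
        · exact Relation.ReflTransGen.head
            ⟨Set.mem_insert a P, hsub hcP, step.2.2⟩
            (reachIn_mono hsub (hreach z h))

lemma connectedIn_union_family {β ι : Type*} {H : SimpleGraph β} {X : Set β} {P : ι → Set β}
    (hX : ConnectedIn H X)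
    (hP : ∀ j, (P j).Nonempty → ∃ x ∈ P j ∩ X, ∀ z ∈ P j, ReachIn H (P j) x z) :
    ConnectedIn H (X ∪ ⋃ j, P j) := by
  obtain ⟨hXne, hXreach⟩ := (connectedIn_iff H X).mp hX
  set U := X ∪ ⋃ j, P j with hU
  have hXU : X ⊆ U := Set.subset_union_left
  have toX : ∀ a ∈ U, ∃ x ∈ X, ReachIn H U a x := by
    intro a ha
    rcases ha with ha | ha
    · exact ⟨a, ha, Relation.ReflTransGen.refl⟩
    · obtain ⟨j, hj⟩ := Set.mem_iUnion.mp ha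
      obtain ⟨x, ⟨hxP, hxX⟩, hre⟩ := hP j ⟨a, hj⟩
      exact ⟨x, hxX, reachIn_mono (hU ▸ (Set.subset_iUnion P j).trans Set.subset_union_right)
        (reachIn_symm (hre a hj))⟩
  rw [connectedIn_iff]
  obtain ⟨x0, hx0⟩ := hXne
  refine ⟨⟨x0, hXU hx0⟩, ?_⟩
  intro a ha b hb
  obtain ⟨xa, hxa, hra⟩ := toX a ha
  obtain ⟨xb, hxb, hrb⟩ := toX b hb
  exact (hra.trans (reachIn_mono hXU (hXreach xa hxa xb hxb))).trans (reachIn_symm hrb)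

section SubdivOne

variable {V : Type*} {G : SimpleGraph V}

lemma subdivRel_one_eq (a b : {d : V × V // G.Adj d.1 d.2} × Fin 1)
    (h : Quot.mk (SubdivRel G 1) a = Quot.mk (SubdivRel G 1) b) :
    a.1.1 = b.1.1 ∨ (a.1.1.1 = b.1.1.2 ∧ a.1.1.2 = b.1.1.1) := by
  have he := Quot.eqvGen_exact h
  clear h
  induction he with
  | rel x y hr => exact Or.inr ⟨hr.1, hr.2.1⟩
  | refl x => exact Or.inl rfl
  | symm x y _ ih =>
    rcases ih with h | ⟨h1, h2⟩
    · exact Or.inl h.symm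
    · exact Or.inr ⟨h2.symm, h1.symm⟩
  | trans x y z _ _ ih1 ih2 =>
    rcases ih1 with h | ⟨h1, h2⟩ <;> rcases ih2 with h' | ⟨h1', h2'⟩
    · exact Or.inl (h.trans h')
    · exact Or.inr ⟨h ▸ h1', h ▸ h2'⟩
    · exact Or.inr ⟨h' ▸ h1, h' ▸ h2⟩
    · exact Or.inl (Prod.ext (h1.trans h2') (h2.trans h1'))

lemma subdiv_one_quot_symm (d d' : {d : V × V // G.Adj d.1 d.2})
    (h1 : d.1.1 = d'.1.2) (h2 : d.1.2 = d'.1.1) :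
    Quot.mk (SubdivRel G 1) (d, (0 : Fin 1)) = Quot.mk (SubdivRel G 1) (d', (0 : Fin 1)) :=
  Quot.sound ⟨h1, h2, rfl⟩

lemma subdiv_one_no_inr_inr (q q' : Quot (SubdivRel G 1)) :
    ¬ (subdiv G 1).Adj (Sum.inr q) (Sum.inr q') := by
  intro h
  replace h := (SimpleGraph.fromRel_adj _ _ _).1 h
  rcases h.2 with h | h <;>
  · rcases h with ⟨h0, _⟩ | ⟨d, i, _, h1, _⟩ | ⟨d, i, j, hij, _, _⟩
    · exact absurd h0 one_ne_zero
    · exact absurd h1 (by simp)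
    · omega

lemma subdiv_one_no_inl_inl (u v : V) :
    ¬ (subdiv G 1).Adj (Sum.inl u) (Sum.inl v) := by
  intro h
  replace h := (SimpleGraph.fromRel_adj _ _ _).1 h
  rcases h.2 with h | h <;>
  · rcases h with ⟨h0, _⟩ | ⟨d, i, _, _, h2⟩ | ⟨d, i, j, _, h1, _⟩
    · exact absurd h0 one_ne_zero
    · exact absurd h2 (by simp)
    · exact absurd h1 (by simp)

lemma subdiv_one_adj_inl_inr (d : {d : V × V // G.Adj d.1 d.2}) :
    (subdiv G 1).Adj (Sum.inl d.1.1) (Sum.inr (Quot.mk _ (d, (0 : Fin 1)))) := by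
  refine (SimpleGraph.fromRel_adj _ _ _).2 ?_
  exact ⟨Sum.inl_ne_inr, Or.inl (Or.inr (Or.inl ⟨d, 0, rfl, rfl, rfl⟩))⟩

lemma subdiv_one_adj_inl_inr_iff (u : V) (q : Quot (SubdivRel G 1)) :
    (subdiv G 1).Adj (Sum.inl u) (Sum.inr q) →
      ∃ d : {d : V × V // G.Adj d.1 d.2}, u = d.1.1 ∧ q = Quot.mk _ (d, (0 : Fin 1)) := by
  intro h
  replace h := (SimpleGraph.fromRel_adj _ _ _).1 h
  rcases h.2 with h | h
  · rcases h with ⟨h0, _⟩ | ⟨d, i, _, h1, h2⟩ | ⟨d, i, j, _, h1, _⟩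
    · exact absurd h0 one_ne_zero
    · exact ⟨d, Sum.inl.inj h1, by
        have := Subsingleton.elim i (0 : Fin 1); subst this; exact Sum.inr.inj h2⟩
    · exact absurd h1 (by simp)
  · rcases h with ⟨h0, _⟩ | ⟨d, i, _, h1, h2⟩ | ⟨d, i, j, _, _, h2⟩
    · exact absurd h0 one_ne_zero
    · exact absurd h2 (by simp)
    · exact absurd h2 (by simp)

end SubdivOne


/-- For every positive integer `t`, every region intersection graph over a
`K_t`-minor-free graph does not contain the 1-subdivision `K_t^(1)` of `K_t` as an
induced minor. -/
theorem statement3 (t : ℕ) (ht : 0 < t) {α β : Type*}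
    (G : SimpleGraph α) (H : SimpleGraph β)
    (hH : ¬ IsMinor (SimpleGraph.completeGraph (Fin t)) H) (hG : IsRIG G H) :
    ¬ IsInducedMinor (subdiv (SimpleGraph.completeGraph (Fin t)) 1) G := by
  classical
  rintro ⟨φ, hφconn, hφdisj, hφiff⟩
  obtain ⟨R, hRconn, hRadj⟩ := hG
  -- the union-of-regions map
  set W : SubdivVert (SimpleGraph.completeGraph (Fin t)) 1 → Set β := fun a => ⋃ v ∈ φ a, R v with hWdef
  have hWconn : ∀ a, ConnectedIn H (W a) := by
    intro a
    refine connectedIn_biUnion (hφconn a) hRconn ?_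
    intro u v _ _ hadj
    exact (hRadj u v hadj.ne).mp hadj
  have hWdisj : ∀ a b : SubdivVert (SimpleGraph.completeGraph (Fin t)) 1, a ≠ b → ¬ (subdiv (SimpleGraph.completeGraph (Fin t)) 1).Adj a b →
      ∀ z, z ∈ W a → z ∈ W b → False := by
    intro a b hne hnadj z hza hzb
    obtain ⟨u, hu, hzu⟩ := Set.mem_iUnion₂.mp hza
    obtain ⟨v, hv, hzv⟩ := Set.mem_iUnion₂.mp hzb
    have huv : u ≠ v := by
      rintro rfl
      exact (hφdisj hne).le_bot ⟨hu, hv⟩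
    have : G.Adj u v := (hRadj u v huv).mpr ⟨z, hzu, hzv⟩
    exact hnadj ((hφiff a b hne).mpr ⟨u, hu, v, hv, this⟩)
  have hWmeet : ∀ a b : SubdivVert (SimpleGraph.completeGraph (Fin t)) 1, a ≠ b → (subdiv (SimpleGraph.completeGraph (Fin t)) 1).Adj a b →
      (W a ∩ W b).Nonempty := by
    intro a b hne hadj
    obtain ⟨u, hu, v, hv, huv⟩ := (hφiff a b hne).mp hadj
    obtain ⟨z, hz1, hz2⟩ := (hRadj u v huv.ne).mp huv
    exact ⟨z, Set.mem_biUnion hu hz1, Set.mem_biUnion hv hz2⟩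
  -- edge vertices
  have Kadj : ∀ {i j : Fin t}, i ≠ j → (SimpleGraph.completeGraph (Fin t)).Adj i j := fun h => h
  set ev : ∀ i j : Fin t, i ≠ j → SubdivVert (SimpleGraph.completeGraph (Fin t)) 1 :=
    fun i j h => Sum.inr (Quot.mk _ (⟨(i, j), Kadj h⟩, (0 : Fin 1))) with hevdef
  have hev_symm : ∀ (i j : Fin t) (h : i ≠ j), ev i j h = ev j i h.symm := by
    intro i j h
    exact congrArg Sum.inr (subdiv_one_quot_symm _ _ rfl rfl)
  have hev_ne_inl : ∀ (i j k : Fin t) (h : i ≠ j), Sum.inl k ≠ ev i j h := by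
    intro i j k h hc
    simp [hevdef] at hc
  have hadj_inl_ev : ∀ (i j : Fin t) (h : i ≠ j), (subdiv (SimpleGraph.completeGraph (Fin t)) 1).Adj (Sum.inl i) (ev i j h) :=
    fun i j h => subdiv_one_adj_inl_inr (G := SimpleGraph.completeGraph (Fin t)) ⟨(i, j), Kadj h⟩
  have hnadj_inl_ev : ∀ (i j k : Fin t) (h : i ≠ j), k ≠ i → k ≠ j →
      ¬ (subdiv (SimpleGraph.completeGraph (Fin t)) 1).Adj (Sum.inl k) (ev i j h) := by
    intro i j k h hki hkj hadj
    obtain ⟨d, hkd, hqd⟩ := subdiv_one_adj_inl_inr_iff _ _ hadj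
    rcases subdivRel_one_eq (G := SimpleGraph.completeGraph (Fin t)) (⟨(i, j), Kadj h⟩, (0 : Fin 1)) (d, (0 : Fin 1)) hqd with
      heq | ⟨h1, h2⟩
    · exact hki (by rw [hkd]; exact (congrArg Prod.fst heq).symm)
    · exact hkj (by rw [hkd]; exact h2.symm)
  have hev_ne : ∀ (i j k l : Fin t) (hij : i ≠ j) (hkl : k ≠ l),
      ¬ (i = k ∧ j = l) → ¬ (i = l ∧ j = k) → ev i j hij ≠ ev k l hkl := by
    intro i j k l hij hkl h1 h2 hc
    have hq := Sum.inr.inj hc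
    rcases subdivRel_one_eq (G := SimpleGraph.completeGraph (Fin t)) (⟨(i, j), Kadj hij⟩, (0 : Fin 1))
      (⟨(k, l), Kadj hkl⟩, (0 : Fin 1)) hq with heq | ⟨ha, hb⟩
    · exact h1 ⟨congrArg Prod.fst heq, congrArg Prod.snd heq⟩
    · exact h2 ⟨ha, hb⟩
  -- branch sets
  set X : Fin t → Set β := fun i => W (Sum.inl i) with hXdef
  have hXconn : ∀ i, ConnectedIn H (X i) := fun i => hWconn _
  have hXdisj : ∀ i j : Fin t, i ≠ j → ∀ z, z ∈ X i → z ∈ X j → False := by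
    intro i j hij z hzi hzj
    exact hWdisj _ _ (fun hc => hij (Sum.inl.inj hc)) (subdiv_one_no_inl_inl i j) z hzi hzj
  have hXYdisj : ∀ (i j k : Fin t) (h : i ≠ j), k ≠ i → k ≠ j →
      ∀ z, z ∈ X k → z ∈ W (ev i j h) → False := by
    intro i j k h hki hkj z hz1 hz2
    exact hWdisj _ _ (hev_ne_inl i j k h) (hnadj_inl_ev i j k h hki hkj) z hz1 hz2
  have hXYmeet : ∀ (i j : Fin t) (h : i ≠ j), (X i ∩ W (ev i j h)).Nonempty := by
    intro i j h
    exact hWmeet _ _ (hev_ne_inl i j i h) (hadj_inl_ev i j h)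
  -- build the connector pieces
  have key : ∀ (i j : Fin t) (hlt : i < j), ∃ P : Set β,
      P ⊆ W (ev i j (Fin.ne_of_lt hlt)) ∧
      (∃ x ∈ P ∩ X i, ∀ z ∈ P, ReachIn H P x z) ∧
      (∀ z ∈ P, z ∉ X j) ∧ (∃ p ∈ P, ∃ q ∈ X j, H.Adj p q) := by
    intro i j hij
    have hne : i ≠ j := Fin.ne_of_lt hij
    obtain ⟨x0, hx0X, hx0Y⟩ := hXYmeet i j hne
    obtain ⟨y0, hy0X, hy0Y⟩ := by
      have := hXYmeet j i hne.symm
      rw [← hev_symm i j hne] at this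
      exact this
    have hreach : ReachIn H (W (ev i j hne)) x0 y0 :=
      ((connectedIn_iff H _).mp (hWconn (ev i j hne))).2 x0 hx0Y y0 hy0Y
    have hx0T : x0 ∉ X j := fun hc => hXdisj i j hne x0 hx0X hc
    obtain ⟨P, hPY, hxP, hPT, hPreach, hcontact⟩ := reachIn_split H hreach hy0X hx0Y hx0T
    exact ⟨P, hPY, ⟨x0, ⟨hxP, hx0X⟩, hPreach⟩, hPT, hcontact⟩
  choose P hPY hPbase hPT hPcontact using key
  -- the minor model
  set B : Fin t → Set β := fun i => X i ∪ ⋃ j, ⋃ (h : i < j), P i j h with hBdef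
  have hPin : ∀ (i j : Fin t) (h : i < j), P i j h ⊆ B i := by
    intro i j h z hz
    exact Or.inr (Set.mem_iUnion.mpr ⟨j, Set.mem_iUnion.mpr ⟨h, hz⟩⟩)
  have hXin : ∀ i : Fin t, X i ⊆ B i := fun i => Set.subset_union_left
  apply hH
  refine ⟨B, ?_, ?_, ?_⟩
  · -- connectivity
    intro i
    refine connectedIn_union_family (hXconn i) ?_
    intro j hne
    by_cases h : i < j
    · have hrw : (⋃ (h' : i < j), P i j h') = P i j h := by
        ext z
        simp only [Set.mem_iUnion]
        exact ⟨fun ⟨_, hz⟩ => hz, fun hz => ⟨h, hz⟩⟩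
      rw [hrw]
      exact hPbase i j h
    · exfalso
      obtain ⟨z, hz⟩ := hne
      rw [Set.mem_iUnion] at hz
      obtain ⟨h', _⟩ := hz
      exact h h'
  · -- disjointness
    intro i j hij
    rw [Set.disjoint_left]
    intro z hzi hzj
    have memP : ∀ (a : Fin t) (w : β), w ∈ (⋃ k, ⋃ (h : a < k), P a k h) →
        ∃ k, ∃ h : a < k, w ∈ P a k h := by
      intro a w hw
      rw [Set.mem_iUnion] at hw
      obtain ⟨k, hk⟩ := hw
      rw [Set.mem_iUnion] at hk
      obtain ⟨h, hk⟩ := hk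
      exact ⟨k, h, hk⟩
    have main : ∀ a b : Fin t, a ≠ b → z ∈ X a →
        z ∈ (⋃ k, ⋃ (h : b < k), P b k h) → False := by
      intro a b hab hza hzb
      obtain ⟨k, hbk, hzP⟩ := memP b z hzb
      by_cases hak : a = k
      · exact hPT b k hbk z hzP (hak ▸ hza)
      · exact hXYdisj b k a (Fin.ne_of_lt hbk) hab hak z hza (hPY b k hbk hzP)
    rcases hzi with hzi | hzi <;> rcases hzj with hzj | hzj
    · exact hXdisj i j hij z hzi hzj
    · exact main i j hij hzi hzj
    · exact main j i hij.symm hzj hzi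
    · obtain ⟨k, hik, hzik⟩ := memP i z hzi
      obtain ⟨l, hjl, hzjl⟩ := memP j z hzj
      have hev' : ev i k (Fin.ne_of_lt hik) ≠ ev j l (Fin.ne_of_lt hjl) := by
        refine hev_ne i k j l (Fin.ne_of_lt hik) (Fin.ne_of_lt hjl) ?_ ?_
        · rintro ⟨h1, -⟩; exact hij h1
        · rintro ⟨h1, h2⟩
          subst h1; subst h2
          exact absurd (hik.trans hjl) (lt_irrefl i)
      refine hWdisj _ _ hev' ?_ z (hPY i k hik hzik) (hPY j l hjl hzjl)
      exact subdiv_one_no_inr_inr _ _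
  · -- edges
    intro i j hadj
    have hij : i ≠ j := hadj.ne
    rcases lt_or_gt_of_ne hij with h | h
    · obtain ⟨p, hp, q, hq, hpq⟩ := hPcontact i j h
      exact ⟨p, hPin i j h hp, q, hXin j hq, hpq⟩
    · obtain ⟨p, hp, q, hq, hpq⟩ := hPcontact j i h
      exact ⟨q, hXin i hq, p, hPin j i h hp, hpq.symm⟩
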